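/- Let V be a real normed vector space and S ⊆ V a closed subset that is stable under addition and under multiplication by positive scalars (a closed convex cone). Let γ : ℝ → V be a C¹ curve with γ(0) ∈ S and γ'(t) ∈ S for all t. Then γ(t) ∈ S for all t ≥ 0. -/

import Mathlib

open MeasureTheory UniformSpace

lemma cone_convex
    {V : Type*} [NormedAddCommGroup V] [NormedSpace ℝ V]
    {S : Set V}
    (hadd : ∀ s ∈ S, ∀ s' ∈ S, s + s' ∈ S)
    (hsmul : ∀ s ∈ S, ∀ c : ℝ, 0 < c → c • s ∈ S) : Convex ℝ S := by
  intro x hx y hy a b ha hb hab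
  rcases eq_or_lt_of_le ha with rfl | ha
  · have hb1 : b = 1 := by linarith
    simp [hb1, hy]
  rcases eq_or_lt_of_le hb with rfl | hb
  · have ha1 : a = 1 := by linarith
    simp [ha1, hx]
  · exact hadd _ (hsmul _ hx _ ha) _ (hsmul _ hy _ hb)

lemma curve_stays_in_closed_cone_complete
    (V : Type*) [NormedAddCommGroup V] [NormedSpace ℝ V] [CompleteSpace V]
    (S : Set V) (hS : IsClosed S)
    (hadd : ∀ s ∈ S, ∀ s' ∈ S, s + s' ∈ S)
    (hsmul : ∀ s ∈ S, ∀ c : ℝ, 0 < c → c • s ∈ S)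
    (γ : ℝ → V) (hγ : ContDiff ℝ 1 γ)
    (h0 : γ 0 ∈ S) (hd : ∀ t : ℝ, deriv γ t ∈ S) :
    ∀ t : ℝ, 0 ≤ t → γ t ∈ S := by
  intro t ht
  rcases eq_or_lt_of_le ht with rfl | ht
  · exact h0
  have hconv : Convex ℝ S := cone_convex hadd hsmul
  have hcd : Continuous (deriv γ) := hγ.continuous_deriv le_rfl
  have hdiff : Differentiable ℝ γ := hγ.differentiable one_ne_zero
  have hInt : IntervalIntegrable (deriv γ) volume 0 t := hcd.intervalIntegrable 0 t
  have hftc : ∫ s in (0:ℝ)..t, deriv γ s = γ t - γ 0 :=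
    intervalIntegral.integral_deriv_eq_sub (fun x _ => hdiff x) hInt
  have hmeas : volume (Set.Ioc (0:ℝ) t) = ENNReal.ofReal t := by
    rw [Real.volume_Ioc, sub_zero]
  have havg : (⨍ s in Set.Ioc (0:ℝ) t, deriv γ s) ∈ S := by
    apply hconv.set_average_mem hS
    · rw [hmeas]; exact (ENNReal.ofReal_pos.2 ht).ne'
    · rw [hmeas]; exact ENNReal.ofReal_ne_top
    · exact ae_of_all _ fun x => hd x
    · exact hcd.integrableOn_Ioc
  have hint_eq : ∫ s in Set.Ioc (0:ℝ) t, deriv γ s =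
      t • ⨍ s in Set.Ioc (0:ℝ) t, deriv γ s := by
    rw [setAverage_eq, measureReal_def, hmeas, ENNReal.toReal_ofReal ht.le,
      smul_inv_smul₀ (ne_of_gt ht)]
  have key : γ t = γ 0 + t • ⨍ s in Set.Ioc (0:ℝ) t, deriv γ s := by
    rw [← hint_eq, ← intervalIntegral.integral_of_le ht.le, hftc]
    abel
  rw [key]
  exact hadd _ h0 _ (hsmul _ havg _ ht)

theorem curve_stays_in_closed_cone
    (V : Type*) [NormedAddCommGroup V] [NormedSpace ℝ V]
    (S : Set V) (hS : IsClosed S)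
    (hadd : ∀ s ∈ S, ∀ s' ∈ S, s + s' ∈ S)
    (hsmul : ∀ s ∈ S, ∀ c : ℝ, 0 < c → c • s ∈ S)
    (γ : ℝ → V) (hγ : ContDiff ℝ 1 γ)
    (h0 : γ 0 ∈ S) (hd : ∀ t : ℝ, deriv γ t ∈ S) :
    ∀ t : ℝ, 0 ≤ t → γ t ∈ S := by
  intro t ht
  set L : V →L[ℝ] Completion V := Completion.toComplL
  have hLcoe : ⇑L = ((↑) : V → Completion V) := Completion.coe_toComplL
  set S' : Set (Completion V) := closure (((↑) : V → Completion V) '' S) with hS'def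
  have hadd' : ∀ s ∈ S', ∀ s' ∈ S', s + s' ∈ S' := by
    intro a ha b hb
    refine map_mem_closure₂ continuous_add ha hb ?_
    rintro x ⟨x', hx', rfl⟩ y ⟨y', hy', rfl⟩
    exact ⟨x' + y', hadd _ hx' _ hy', by push_cast; ring⟩
  have hsmul' : ∀ s ∈ S', ∀ c : ℝ, 0 < c → c • s ∈ S' := by
    intro a ha c hc
    refine map_mem_closure (continuous_const_smul c) ha ?_
    rintro x ⟨x', hx', rfl⟩
    refine ⟨c • x', hsmul _ hx' _ hc, ?_⟩
    simp [← hLcoe, _root_.map_smul]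
  have hγ' : ContDiff ℝ 1 (fun s => L (γ s)) := L.contDiff.comp hγ
  have hderiv' : ∀ s : ℝ, deriv (fun s => L (γ s)) s = L (deriv γ s) := by
    intro s
    exact (L.hasFDerivAt.comp_hasDerivAt s
      ((hγ.differentiable one_ne_zero) s).hasDerivAt).deriv
  have hmem : ∀ s : ℝ, 0 ≤ s → L (γ s) ∈ S' := by
    apply curve_stays_in_closed_cone_complete (Completion V) S' isClosed_closure
      hadd' hsmul' _ hγ'
    · exact subset_closure ⟨γ 0, h0, by rw [hLcoe]⟩
    · intro s
      rw [hderiv' s]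
      exact subset_closure ⟨deriv γ s, hd s, by rw [hLcoe]⟩
  have h1 : (γ t : Completion V) ∈ closure (((↑) : V → Completion V) '' S) := by
    have := hmem t ht
    rwa [hLcoe] at this
  have hne : S.Nonempty := ⟨γ 0, h0⟩
  have hiso : Isometry ((↑) : V → Completion V) := Completion.coe_isometry
  rw [Metric.mem_closure_iff_infDist_zero (hne.image _)] at h1
  rw [Metric.infDist_image hiso] at h1
  exact (hS.mem_iff_infDist_zero hne).2 h1
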